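/- Let ω ∈ ℝ with ω ≠ 0 and σ : ℤ → ℝ with σ_j = 0 for j < 0. Define infinite matrices C, M : ℕ × ℕ → ℂ by C_{j,j} = −iω + σ_{j−1}/2, C_{j,j+1} = σ_j/2, and C_{j,k} = 0 otherwise; and M_{j,k} = (2(−1)^{j+k}/(−2iω + σ_{j−1})) Π_{l=j}^{k−1} (σ_l/(−2iω + σ_l)) for k ≥ j (empty product equal to 1 for k = j) and M_{j,k} = 0 for k < j (all the denominators −2iω + σ_l are nonzero since ω ≠ 0 is real and σ_l is real). Then M is a two-sided inverse of C: for all j, m ∈ ℕ, Σ_k C_{j,k} M_{k,m} = δ_{j,m} and Σ_k M_{j,k} C_{k,m} = δ_{j,m}, where both sums have finitely many nonzero terms and δ is the Kronecker delta. -/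

import Mathlib

lemma dne (ω : ℝ) (hω : ω ≠ 0) (σ : ℤ → ℝ) (x : ℤ) :
    -(2 * Complex.I * (ω : ℂ)) + (σ x : ℂ) ≠ 0 := by
  intro h
  have := congrArg Complex.im h
  simp [Complex.add_im, Complex.mul_im] at this
  exact hω this



/-- The upper-bidiagonal operator `C₂`: `C_{j,j} = −iω + σ_{j−1}/2`,
`C_{j,j+1} = σ_j/2`, all other entries zero. Here `σ : ℤ → ℝ` with `σ_j = 0` for `j < 0`. -/
noncomputable def Cmat2 (ω : ℝ) (σ : ℤ → ℝ) (j k : ℕ) : ℂ :=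
  if k = j then -(Complex.I * (ω : ℂ)) + (σ ((j : ℤ) - 1) : ℂ) / 2
  else if k = j + 1 then (σ (j : ℤ) : ℂ) / 2
  else 0

/-- The upper-triangular operator `M₂` with entries
`M_{j,k} = (2(−1)^{j+k}/(−2iω + σ_{j−1})) Π_{l=j}^{k−1} (σ_l/(−2iω + σ_l))` for `k ≥ j`
(empty product equal to `1` for `k = j`), and `0` for `k < j`. -/
noncomputable def Mmat2 (ω : ℝ) (σ : ℤ → ℝ) (j k : ℕ) : ℂ :=
  if j ≤ k then
    (2 * (-1 : ℂ) ^ (j + k) / (-(2 * Complex.I * (ω : ℂ)) + (σ ((j : ℤ) - 1) : ℂ))) *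
      ∏ l ∈ Finset.Ico j k,
        ((σ (l : ℤ) : ℂ) / (-(2 * Complex.I * (ω : ℂ)) + (σ (l : ℤ) : ℂ)))
  else 0

/-- `M₂` is a two-sided inverse of `C₂`. The sums over `k` have finitely
many nonzero terms, so they are expressed as `tsum`s. -/
theorem stmt17 (ω : ℝ) (hω : ω ≠ 0) (σ : ℤ → ℝ) (hσneg : ∀ j : ℤ, j < 0 → σ j = 0) :
    (∀ j m : ℕ, ∑' k : ℕ, Cmat2 ω σ j k * Mmat2 ω σ k m =
      if j = m then 1 else 0) ∧
    (∀ j m : ℕ, ∑' k : ℕ, Mmat2 ω σ j k * Cmat2 ω σ k m =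
      if j = m then 1 else 0) := by
  have hne := dne ω hω σ
  constructor
  · intro j m
    rw [tsum_eq_sum (s := {j, j+1}) (by
      intro k hk
      simp only [Finset.mem_insert, Finset.mem_singleton, not_or] at hk
      have h1 : Cmat2 ω σ j k = 0 := by
        simp only [Cmat2]
        rw [if_neg (by omega), if_neg (by omega)]
      rw [h1, zero_mul])]
    rw [Finset.sum_insert (by simp), Finset.sum_singleton]
    have hC1 : Cmat2 ω σ j j = -(Complex.I * (ω : ℂ)) + (σ ((j : ℤ) - 1) : ℂ) / 2 := by
      simp [Cmat2]
    have hC2 : Cmat2 ω σ j (j+1) = (σ (j : ℤ) : ℂ) / 2 := by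
      simp [Cmat2]
    rw [hC1, hC2]
    rcases lt_trichotomy m j with h | heq | h
    · rw [if_neg (by omega)]
      have h1 : Mmat2 ω σ j m = 0 := by simp only [Mmat2]; rw [if_neg (by omega)]
      have h2 : Mmat2 ω σ (j+1) m = 0 := by simp only [Mmat2]; rw [if_neg (by omega)]
      rw [h1, h2]; ring
    · subst heq
      rw [if_pos rfl]
      have h1 : Mmat2 ω σ m m = 2 / (-(2 * Complex.I * (ω : ℂ)) + (σ ((m : ℤ) - 1) : ℂ)) := by
        simp only [Mmat2]
        rw [if_pos le_rfl, Finset.Ico_self, Finset.prod_empty,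
          Even.neg_one_pow ⟨m, rfl⟩]
        ring
      have h2 : Mmat2 ω σ (m+1) m = 0 := by simp only [Mmat2]; rw [if_neg (by omega)]
      rw [h1, h2]
      linear_combination mul_inv_cancel₀ (hne ((m:ℤ) - 1))
    · rw [if_neg (by omega)]
      have hc : ((j+1 : ℕ) : ℤ) - 1 = (j : ℤ) := by push_cast; ring
      have h1 : Mmat2 ω σ j m =
          (2 * (-1 : ℂ) ^ (j + m) / (-(2 * Complex.I * (ω : ℂ)) + (σ ((j : ℤ) - 1) : ℂ))) *
            (((σ (j : ℤ) : ℂ) / (-(2 * Complex.I * (ω : ℂ)) + (σ (j : ℤ) : ℂ))) *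
              ∏ l ∈ Finset.Ico (j+1) m,
                ((σ (l : ℤ) : ℂ) / (-(2 * Complex.I * (ω : ℂ)) + (σ (l : ℤ) : ℂ)))) := by
        simp only [Mmat2]
        rw [if_pos (le_of_lt h), Finset.prod_eq_prod_Ico_succ_bot h]
      have h2 : Mmat2 ω σ (j+1) m =
          (2 * (-(-1 : ℂ) ^ (j + m)) / (-(2 * Complex.I * (ω : ℂ)) + (σ (j : ℤ) : ℂ))) *
            ∏ l ∈ Finset.Ico (j+1) m,
              ((σ (l : ℤ) : ℂ) / (-(2 * Complex.I * (ω : ℂ)) + (σ (l : ℤ) : ℂ))) := by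
        simp only [Mmat2]
        rw [if_pos (by omega : j + 1 ≤ m), hc,
          show j + 1 + m = (j + m) + 1 by omega, pow_succ]
        ring
      rw [h1, h2]
      set P := ∏ l ∈ Finset.Ico (j+1) m,
        ((σ (l : ℤ) : ℂ) / (-(2 * Complex.I * (ω : ℂ)) + (σ (l : ℤ) : ℂ))) with hP
      linear_combination ((-1 : ℂ) ^ (j + m) * (σ (j : ℤ) : ℂ) * P *
        (-(2 * Complex.I * (ω : ℂ)) + (σ (j : ℤ) : ℂ))⁻¹) * mul_inv_cancel₀ (hne ((j:ℤ) - 1))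
  · intro j m
    rw [tsum_eq_sum (s := {m-1, m}) (by
      intro k hk
      simp only [Finset.mem_insert, Finset.mem_singleton, not_or] at hk
      have h1 : Cmat2 ω σ k m = 0 := by
        simp only [Cmat2]
        rw [if_neg (by omega), if_neg (by omega)]
      rw [h1, mul_zero])]
    match m with
    | 0 =>
      rw [show ({0-1, 0} : Finset ℕ) = {0} by rfl, Finset.sum_singleton]
      have hC : Cmat2 ω σ 0 0 = -(Complex.I * (ω : ℂ)) := by
        simp [Cmat2, hσneg (-1) (by norm_num)]
      rw [hC]
      by_cases hj : j = 0
      · subst hj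
        rw [if_pos rfl]
        have h1 : Mmat2 ω σ 0 0 = 2 / (-(2 * Complex.I * (ω : ℂ))) := by
          simp only [Mmat2]
          rw [if_pos le_rfl, Finset.Ico_self, Finset.prod_empty]
          norm_num [hσneg (-1) (by norm_num)]
        rw [h1]
        have hω' : (ω : ℂ) ≠ 0 := Complex.ofReal_ne_zero.2 hω
        field_simp
      · rw [if_neg hj]
        have h1 : Mmat2 ω σ j 0 = 0 := by simp only [Mmat2]; rw [if_neg (by omega)]
        rw [h1]; ring
    | n + 1 =>
      rw [show (n+1) - 1 = n from rfl,
        Finset.sum_insert (by simp), Finset.sum_singleton]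
      have hc : ((n+1 : ℕ) : ℤ) - 1 = (n : ℤ) := by push_cast; ring
      have hC1 : Cmat2 ω σ n (n+1) = (σ (n : ℤ) : ℂ) / 2 := by
        simp [Cmat2]
      have hC2 : Cmat2 ω σ (n+1) (n+1) =
          -(Complex.I * (ω : ℂ)) + (σ (n : ℤ) : ℂ) / 2 := by
        simp [Cmat2, hc]
      rw [hC1, hC2]
      rcases lt_trichotomy (n+1) j with h | heq | h
      · rw [if_neg (by omega)]
        have h1 : Mmat2 ω σ j n = 0 := by simp only [Mmat2]; rw [if_neg (by omega)]
        have h2 : Mmat2 ω σ j (n+1) = 0 := by simp only [Mmat2]; rw [if_neg (by omega)]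
        rw [h1, h2]; ring
      · subst heq
        rw [if_pos rfl]
        have h1 : Mmat2 ω σ (n+1) n = 0 := by simp only [Mmat2]; rw [if_neg (by omega)]
        have h2 : Mmat2 ω σ (n+1) (n+1) =
            2 / (-(2 * Complex.I * (ω : ℂ)) + (σ (n : ℤ) : ℂ)) := by
          simp only [Mmat2]
          rw [if_pos le_rfl, hc, Finset.Ico_self, Finset.prod_empty,
            Even.neg_one_pow ⟨n+1, rfl⟩]
          ring
        rw [h1, h2]
        field_simp [hne (n:ℤ)]
        ring
      · have hj : j ≤ n := by omega
        rw [if_neg (by omega)]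
        have h1 : Mmat2 ω σ j (n+1) =
            (2 * (-(-1 : ℂ) ^ (j + n)) / (-(2 * Complex.I * (ω : ℂ)) + (σ ((j : ℤ) - 1) : ℂ))) *
              ((∏ l ∈ Finset.Ico j n,
                ((σ (l : ℤ) : ℂ) / (-(2 * Complex.I * (ω : ℂ)) + (σ (l : ℤ) : ℂ)))) *
                ((σ (n : ℤ) : ℂ) / (-(2 * Complex.I * (ω : ℂ)) + (σ (n : ℤ) : ℂ)))) := by
          simp only [Mmat2]
          rw [if_pos (by omega : j ≤ n + 1), Finset.prod_Ico_succ_top hj,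
            show j + (n+1) = (j + n) + 1 by omega, pow_succ]
          ring
        have h2 : Mmat2 ω σ j n =
            (2 * (-1 : ℂ) ^ (j + n) / (-(2 * Complex.I * (ω : ℂ)) + (σ ((j : ℤ) - 1) : ℂ))) *
              ∏ l ∈ Finset.Ico j n,
                ((σ (l : ℤ) : ℂ) / (-(2 * Complex.I * (ω : ℂ)) + (σ (l : ℤ) : ℂ))) := by
          simp only [Mmat2]
          rw [if_pos hj]
        rw [h1, h2]
        set P := ∏ l ∈ Finset.Ico j n,
          ((σ (l : ℤ) : ℂ) / (-(2 * Complex.I * (ω : ℂ)) + (σ (l : ℤ) : ℂ))) with hP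
        field_simp [hne ((j:ℤ) - 1), hne (n:ℤ)]
        ring
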